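/- Under the hypotheses of the linear-convergence theorem (Newton tracking primal–dual iteration with ε − α·λ_max(I − 𝐖) > 4L_f²/μ_f, v⁰ = 0, v* in the column space of (I − 𝐖)^{1/2}, and contraction factor 1/(1+δ') with δ' > 0 as defined there), the primal iterates converge linearly to x*: for every t ≥ 0, ‖x^t − x*‖² ≤ (1/(ε − α·λ_max(I − 𝐖))) · (1/(1+δ'))^t · ‖ζ⁰ − ζ*‖²_G. -/

import Mathlib

open Matrix Kronecker
open scoped InnerProductSpace

noncomputable section

/-- Local decision space `ℝ^p`. -/
abbrev Ep (p : ℕ) : Type := EuclideanSpace ℝ (Fin p)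

/-- Stacked space `ℝ^{np}`. -/
abbrev Vnp (n p : ℕ) : Type := EuclideanSpace ℝ (Fin n × Fin p)

/-- The `i`-th block `x_i ∈ ℝ^p` of a stacked vector `x ∈ ℝ^{np}`. -/
def blk {n p : ℕ} (x : Vnp n p) (i : Fin n) : Ep p := WithLp.toLp 2 (fun j => x (i, j))

/-- Aggregate objective `f(x) = ∑ i, f_i(x_i)`. -/
def aggF {n p : ℕ} (f : Fin n → Ep p → ℝ) (x : Vnp n p) : ℝ := ∑ i, f i (blk x i)

/-- Stacked gradient `∇f(x) = [∇f_1(x_1); …; ∇f_n(x_n)]`. -/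
def aggGrad {n p : ℕ} (g : Fin n → Ep p → Ep p) (x : Vnp n p) : Vnp n p :=
  WithLp.toLp 2 (fun ij : Fin n × Fin p => g ij.1 (blk x ij.1) ij.2)

/-- Block-diagonal Hessian `∇²f(x)` applied to `w`. -/
def aggHess {n p : ℕ} (h : Fin n → Ep p → (Ep p →L[ℝ] Ep p)) (x w : Vnp n p) : Vnp n p :=
  WithLp.toLp 2 (fun ij : Fin n × Fin p => h ij.1 (blk x ij.1) (blk w ij.1) ij.2)

/-- `𝐖 = W ⊗ I_p`. -/
def bigW {n : ℕ} (p : ℕ) (W : Matrix (Fin n) (Fin n) ℝ) :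
    Matrix (Fin n × Fin p) (Fin n × Fin p) ℝ :=
  W ⊗ₖ (1 : Matrix (Fin p) (Fin p) ℝ)

/-- `I − 𝐖`. -/
def IWmat {n : ℕ} (p : ℕ) (W : Matrix (Fin n) (Fin n) ℝ) :
    Matrix (Fin n × Fin p) (Fin n × Fin p) ℝ :=
  1 - bigW p W

/-- The square root of a positive semidefinite matrix (as in the older Mathlib). -/
def Matrix.PosSemidef.sqrt {n : Type*} [Fintype n] [DecidableEq n]
    {A : Matrix n n ℝ} (hA : A.PosSemidef) : Matrix n n ℝ :=
  (hA.1.eigenvectorUnitary : Matrix n n ℝ) *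
    diagonal ((↑) ∘ (fun x : ℝ => √x) ∘ hA.1.eigenvalues) *
    (star hA.1.eigenvectorUnitary : Matrix n n ℝ)

/-- Largest eigenvalue of a (square, real) matrix. -/
def lamMax {m : Type*} [Fintype m] [DecidableEq m] (A : Matrix m m ℝ) : ℝ :=
  sSup {r : ℝ | Module.End.HasEigenvalue (Matrix.toLin' A) r}

/-- Smallest nonzero eigenvalue of a (square, real) matrix. -/
def lamMinNZ {m : Type*} [Fintype m] [DecidableEq m] (A : Matrix m m ℝ) : ℝ :=
  sInf {r : ℝ | r ≠ 0 ∧ Module.End.HasEigenvalue (Matrix.toLin' A) r}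

/-- `δ = 1 − 4L_f²/(μ_f(ε − α·λ_max(I−𝐖)))`. -/
def deltaNT (μf Lf α ε lmax : ℝ) : ℝ := 1 - 4 * Lf ^ 2 / (μf * (ε - α * lmax))

/-- The contraction constant `δ'` from the linear convergence theorem. -/
def deltaNT' (μf Lf α ε lmax lminhat β φ : ℝ) : ℝ :=
  min (μf * deltaNT μf Lf α ε lmax /
        ((1 + deltaNT μf Lf α ε lmax) * (ε + β * φ * Lf ^ 2 / (α * lminhat))))
      (α * (deltaNT μf Lf α ε lmax) ^ 2 * (ε - α * lmax) * lminhat /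
        (β * ε ^ 2 / (β - 1) + β * φ * (2 * Lf + α * lmax) ^ 2 / (φ - 1)))


theorem Matrix.PosSemidef.sqrt_mul_self {n : Type*} [Fintype n] [DecidableEq n]
    {A : Matrix n n ℝ} (hA : A.PosSemidef) : hA.sqrt * hA.sqrt = A := by
  have hU : star (hA.1.eigenvectorUnitary : Matrix n n ℝ) * hA.1.eigenvectorUnitary = 1 :=
    Unitary.star_mul_self_of_mem hA.1.eigenvectorUnitary.2
  have hD : diagonal ((↑) ∘ (fun x : ℝ => √x) ∘ hA.1.eigenvalues) *
      diagonal ((↑) ∘ (fun x : ℝ => √x) ∘ hA.1.eigenvalues)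
      = diagonal (RCLike.ofReal ∘ hA.1.eigenvalues : n → ℝ) := by
    rw [diagonal_mul_diagonal]
    congr 1; funext i
    simp [Real.mul_self_sqrt (hA.eigenvalues_nonneg i)]
  conv_rhs => rw [hA.1.spectral_theorem, Unitary.conjStarAlgAut_apply]
  unfold Matrix.PosSemidef.sqrt
  calc _ = (hA.1.eigenvectorUnitary : Matrix n n ℝ) *
      (diagonal ((↑) ∘ (fun x : ℝ => √x) ∘ hA.1.eigenvalues) *
      (star (hA.1.eigenvectorUnitary : Matrix n n ℝ) * (hA.1.eigenvectorUnitary : Matrix n n ℝ)) *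
      diagonal ((↑) ∘ (fun x : ℝ => √x) ∘ hA.1.eigenvalues)) *
      star (hA.1.eigenvectorUnitary : Matrix n n ℝ) := by simp only [Matrix.mul_assoc]
    _ = _ := by rw [hU, Matrix.mul_one, hD]

theorem Matrix.PosSemidef.sqrt_isHermitian {n : Type*} [Fintype n] [DecidableEq n]
    {A : Matrix n n ℝ} (hA : A.PosSemidef) : hA.sqrt.IsHermitian := by
  unfold Matrix.PosSemidef.sqrt Matrix.IsHermitian
  simp [Matrix.mul_assoc, Matrix.star_eq_conjTranspose]
section Infra


variable {E : Type*} [NormedAddCommGroup E] [InnerProductSpace ℝ E]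

/-- Symmetric operator with quadratic form bounded by `c` has operator bound `c`. -/
lemma sym_op_bound (T : E →ₗ[ℝ] E) (hsym : ∀ u w : E, ⟪T u, w⟫_ℝ = ⟪u, T w⟫_ℝ)
    (c : ℝ) (hb : ∀ w : E, |⟪T w, w⟫_ℝ| ≤ c * ‖w‖ ^ 2) (w : E) : ‖T w‖ ≤ c * ‖w‖ := by
  rcases eq_or_ne w 0 with rfl | hw
  · simp
  have hw2 : (0:ℝ) < ‖w‖ := norm_pos_iff.2 hw
  have hc : 0 ≤ c := by
    have h1 := (abs_nonneg ⟪T w, w⟫_ℝ).trans (hb w)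
    nlinarith [pow_pos hw2 2, h1]
  rcases eq_or_ne (T w) 0 with hTw | hTw
  · rw [hTw]; simp; positivity
  have hTw2 : (0:ℝ) < ‖T w‖ := norm_pos_iff.2 hTw
  set u : E := (‖w‖ / ‖T w‖) • T w with hu
  have hun : ‖u‖ = ‖w‖ := by
    rw [hu, norm_smul, Real.norm_eq_abs, abs_of_nonneg (by positivity)]
    field_simp
  have hinner : ⟪T w, u⟫_ℝ = ‖w‖ * ‖T w‖ := by
    rw [hu, real_inner_smul_right, real_inner_self_eq_norm_sq]
    field_simp
  have key : 4 * ⟪T w, u⟫_ℝ = ⟪T (w + u), w + u⟫_ℝ - ⟪T (w - u), w - u⟫_ℝ := by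
    have h1 := hsym u w
    simp only [map_add, map_sub, inner_add_left, inner_add_right, inner_sub_left,
      inner_sub_right]
    have h2 : ⟪T u, w⟫_ℝ = ⟪T w, u⟫_ℝ := by rw [hsym u w, real_inner_comm]
    linarith
  have hbp := hb (w + u)
  have hbm := hb (w - u)
  have h1 : ⟪T (w + u), w + u⟫_ℝ ≤ c * ‖w + u‖ ^ 2 := (abs_le.1 hbp).2
  have h2 : -(c * ‖w - u‖ ^ 2) ≤ ⟪T (w - u), w - u⟫_ℝ := (abs_le.1 hbm).1
  have hpar : ‖w + u‖ ^ 2 + ‖w - u‖ ^ 2 = 2 * (‖w‖ ^ 2 + ‖u‖ ^ 2) := by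
    have := parallelogram_law_with_norm ℝ w u
    nlinarith [this]
  have : 4 * (‖w‖ * ‖T w‖) ≤ c * (2 * (‖w‖ ^ 2 + ‖u‖ ^ 2)) := by
    rw [← hinner]
    calc 4 * ⟪T w, u⟫_ℝ = ⟪T (w + u), w + u⟫_ℝ - ⟪T (w - u), w - u⟫_ℝ := key
    _ ≤ c * ‖w + u‖ ^ 2 + c * ‖w - u‖ ^ 2 := by linarith
    _ = c * (‖w + u‖ ^ 2 + ‖w - u‖ ^ 2) := by ring
    _ = c * (2 * (‖w‖ ^ 2 + ‖u‖ ^ 2)) := by rw [hpar]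
  rw [hun] at this
  nlinarith

/-- Peter–Paul: `‖a + w‖² ≤ β/(β−1)·‖a‖² + β·‖w‖²` for `β > 1`. -/
lemma norm_add_sq_peter_paul (a w : E) (β : ℝ) (hβ : 1 < β) :
    ‖a + w‖ ^ 2 ≤ β / (β - 1) * ‖a‖ ^ 2 + β * ‖w‖ ^ 2 := by
  have hb1 : (0:ℝ) < β - 1 := by linarith
  have h1 : ‖a + w‖ ^ 2 = ‖a‖ ^ 2 + 2 * ⟪a, w⟫_ℝ + ‖w‖ ^ 2 := by
    rw [← real_inner_self_eq_norm_sq, ← real_inner_self_eq_norm_sq, ← real_inner_self_eq_norm_sq]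
    simp only [inner_add_left, inner_add_right]
    rw [real_inner_comm w a]; ring
  have h2 : 2 * ⟪a, w⟫_ℝ ≤ 2 * (‖a‖ * ‖w‖) := by
    have := real_inner_le_norm a w; linarith
  have h3 : 2 * (‖a‖ * ‖w‖) ≤ (1 / (β - 1)) * ‖a‖ ^ 2 + (β - 1) * ‖w‖ ^ 2 := by
    have hexp : (1/(β-1)) * ‖a‖^2 + (β-1) * ‖w‖^2 - 2 * (‖a‖ * ‖w‖)
        = ((‖a‖ - (β-1) * ‖w‖) ^ 2) / (β-1) := by
      field_simp; ring
    have h5 : 0 ≤ ((‖a‖ - (β-1) * ‖w‖) ^ 2) / (β-1) := by positivity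
    linarith [hexp ▸ h5]
  have hfrac : β / (β - 1) = 1 + 1 / (β - 1) := by field_simp; ring
  rw [hfrac]; nlinarith

lemma inner_sub_self_right (u w : E) : ⟪u - w, u⟫_ℝ = -⟪u, w - u⟫_ℝ := by
  rw [inner_sub_left, inner_sub_right, real_inner_comm w u]; ring

lemma Qform_expand (T : E →ₗ[ℝ] E) (hT : ∀ u w : E, ⟪T u, w⟫_ℝ = ⟪u, T w⟫_ℝ)
    (ε α : ℝ) (a Δ : E) :
    ⟪a + Δ, ε • (a + Δ) - α • T (a + Δ)⟫_ℝ
      = ⟪a, ε • a - α • T a⟫_ℝ + 2 * ⟪a, ε • Δ - α • T Δ⟫_ℝ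
        + ⟪Δ, ε • Δ - α • T Δ⟫_ℝ := by
  have hsym : ⟪Δ, T a⟫_ℝ = ⟪a, T Δ⟫_ℝ := by rw [← hT Δ a, real_inner_comm]
  have hcomm : ⟪Δ, a⟫_ℝ = ⟪a, Δ⟫_ℝ := real_inner_comm _ _
  simp only [map_add, smul_add, inner_add_left, inner_add_right, inner_sub_left,
    inner_sub_right, real_inner_smul_right]
  rw [hcomm, hsym]; ring

end Infra

section Spectral


variable {m : Type*} [Fintype m] [DecidableEq m]

lemma tEL_apply (A : Matrix m m ℝ) (x : EuclideanSpace ℝ m) :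
    Matrix.toEuclideanLin A x = A *ᵥ x := by
  simp [Matrix.toEuclideanLin_apply]

lemma tEL_symm {A : Matrix m m ℝ} (hA : A.IsHermitian) (x y : EuclideanSpace ℝ m) :
    ⟪Matrix.toEuclideanLin A x, y⟫_ℝ = ⟪x, Matrix.toEuclideanLin A y⟫_ℝ := by
  simp only [tEL_apply, PiLp.inner_apply, RCLike.inner_apply, starRingEnd_apply, star_trivial,
    Matrix.mulVec, dotProduct]
  simp only [Finset.sum_mul, Finset.mul_sum]
  rw [Finset.sum_comm]
  apply Finset.sum_congr rfl; intro i _; apply Finset.sum_congr rfl; intro j _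
  have h : A j i = A i j := by
    conv_lhs => rw [← hA]
    simp [Matrix.conjTranspose_apply]
  rw [h]; ring

lemma tEL_eigenbasis {A : Matrix m m ℝ} (hA : A.IsHermitian) (i : m) :
    Matrix.toEuclideanLin A (hA.eigenvectorBasis i) = hA.eigenvalues i • hA.eigenvectorBasis i := by
  ext j
  have := congrFun (hA.mulVec_eigenvectorBasis i) j
  simpa [tEL_apply] using this

/-- classification of eigenvalues of a Hermitian real matrix -/
lemma eig_iff {A : Matrix m m ℝ} (hA : A.IsHermitian) (r : ℝ) :
    Module.End.HasEigenvalue (Matrix.toLin' A) r ↔ ∃ i, hA.eigenvalues i = r := by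
  constructor
  · intro h
    obtain ⟨v, hv⟩ := h.exists_hasEigenvector
    have hv1 : Matrix.toLin' A v = r • v := hv.apply_eq_smul
    have hv2 : v ≠ 0 := hv.2
    set y : EuclideanSpace ℝ m := WithLp.toLp 2 v with hy
    have hAy : Matrix.toEuclideanLin A y = r • y := by
      ext j
      have := congrFun (show A *ᵥ v = r • v from by
        rw [← Matrix.toLin'_apply A v]; exact hv1) j
      simpa [tEL_apply] using this
    by_contra hno
    push_neg at hno
    -- show all coordinates of y in eigenbasis vanish
    have hcoord : ∀ i, ⟪hA.eigenvectorBasis i, y⟫_ℝ = 0 := by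
      intro i
      have h1 : ⟪hA.eigenvectorBasis i, Matrix.toEuclideanLin A y⟫_ℝ
          = hA.eigenvalues i * ⟪hA.eigenvectorBasis i, y⟫_ℝ := by
        rw [← tEL_symm hA, tEL_eigenbasis hA i, real_inner_smul_left]
      rw [hAy, real_inner_smul_right] at h1
      have hne : hA.eigenvalues i ≠ r := hno i
      have : (r - hA.eigenvalues i) * ⟪hA.eigenvectorBasis i, y⟫_ℝ = 0 := by linarith
      rcases mul_eq_zero.1 this with h | h
      · exact absurd (by linarith : hA.eigenvalues i = r) hne
      · exact h
    have hrepr : hA.eigenvectorBasis.repr y = 0 := by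
      ext i
      simp [OrthonormalBasis.repr_apply_apply, hcoord i]
    have : y = 0 := by
      have := congrArg hA.eigenvectorBasis.repr.symm hrepr
      simpa using this
    exact hv2 (congrArg WithLp.ofLp this)
  · rintro ⟨i, rfl⟩
    apply Module.End.hasEigenvalue_of_hasEigenvector (x := WithLp.ofLp (hA.eigenvectorBasis i))
    constructor
    · rw [Module.End.mem_eigenspace_iff]
      simpa [Matrix.toLin'_apply] using hA.mulVec_eigenvectorBasis i
    · exact fun h0 => hA.eigenvectorBasis.orthonormal.ne_zero i
        (by simpa using congrArg (WithLp.toLp 2) h0)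

lemma eigset_eq {A : Matrix m m ℝ} (hA : A.IsHermitian) :
    {r : ℝ | Module.End.HasEigenvalue (Matrix.toLin' A) r} = Set.range hA.eigenvalues := by
  ext r; simp [eig_iff hA, eq_comm, Set.range]

lemma norm_sq_eq_sum_coord {A : Matrix m m ℝ} (hA : A.IsHermitian) (y : EuclideanSpace ℝ m) :
    ‖y‖ ^ 2 = ∑ i, ⟪hA.eigenvectorBasis i, y⟫_ℝ ^ 2 := by
  have h := (hA.eigenvectorBasis).sum_inner_mul_inner y y
  rw [← real_inner_self_eq_norm_sq, ← h]
  apply Finset.sum_congr rfl; intro i _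
  rw [real_inner_comm y]; ring

lemma quad_eq_sum {A : Matrix m m ℝ} (hA : A.IsHermitian) (y : EuclideanSpace ℝ m) :
    ⟪y, Matrix.toEuclideanLin A y⟫_ℝ
      = ∑ i, hA.eigenvalues i * ⟪hA.eigenvectorBasis i, y⟫_ℝ ^ 2 := by
  have h := (hA.eigenvectorBasis).sum_inner_mul_inner y (Matrix.toEuclideanLin A y)
  rw [← h]
  apply Finset.sum_congr rfl; intro i _
  have h2 : ⟪hA.eigenvectorBasis i, Matrix.toEuclideanLin A y⟫_ℝ
      = hA.eigenvalues i * ⟪hA.eigenvectorBasis i, y⟫_ℝ := by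
    rw [← tEL_symm hA, tEL_eigenbasis hA i, real_inner_smul_left]
  rw [h2, real_inner_comm y]; ring

lemma lam_le_lamMax {A : Matrix m m ℝ} (hA : A.IsHermitian) (i : m) :
    hA.eigenvalues i ≤ lamMax A := by
  unfold lamMax
  rw [eigset_eq hA]
  exact le_csSup (Set.finite_range _).bddAbove ⟨i, rfl⟩

lemma quad_le_lamMax {A : Matrix m m ℝ} (hA : A.IsHermitian) (y : EuclideanSpace ℝ m) :
    ⟪y, Matrix.toEuclideanLin A y⟫_ℝ ≤ lamMax A * ‖y‖ ^ 2 := by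
  rw [quad_eq_sum hA, norm_sq_eq_sum_coord hA, Finset.mul_sum]
  apply Finset.sum_le_sum; intro i _
  exact mul_le_mul_of_nonneg_right (lam_le_lamMax hA i) (sq_nonneg _)

lemma psd_quad_nonneg {A : Matrix m m ℝ} (hA : A.PosSemidef) (y : EuclideanSpace ℝ m) :
    0 ≤ ⟪y, Matrix.toEuclideanLin A y⟫_ℝ := by
  rw [quad_eq_sum hA.1]
  apply Finset.sum_nonneg; intro i _
  exact mul_nonneg (hA.eigenvalues_nonneg i) (sq_nonneg _)

lemma lamMax_nonneg [Nonempty m] {A : Matrix m m ℝ} (hA : A.PosSemidef) : 0 ≤ lamMax A := by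
  obtain ⟨i⟩ := ‹Nonempty m›
  exact (hA.eigenvalues_nonneg i).trans (lam_le_lamMax hA.1 i)

lemma quad_ge_lamMinNZ {A : Matrix m m ℝ} (hA : A.IsHermitian) (y : EuclideanSpace ℝ m)
    (hy : ∀ k : EuclideanSpace ℝ m, Matrix.toEuclideanLin A k = 0 → ⟪k, y⟫_ℝ = 0) :
    lamMinNZ A * ‖y‖ ^ 2 ≤ ⟪y, Matrix.toEuclideanLin A y⟫_ℝ := by
  rw [quad_eq_sum hA, norm_sq_eq_sum_coord hA, Finset.mul_sum]
  apply Finset.sum_le_sum; intro i _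
  rcases eq_or_ne (hA.eigenvalues i) 0 with h0 | h0
  · have hker : Matrix.toEuclideanLin A (hA.eigenvectorBasis i) = 0 := by
      rw [tEL_eigenbasis hA i, h0, zero_smul]
    rw [hy _ hker, h0]; simp
  · have hmem : lamMinNZ A ≤ hA.eigenvalues i := by
      unfold lamMinNZ
      apply csInf_le
      · apply BddBelow.mono (show {r : ℝ | r ≠ 0 ∧ Module.End.HasEigenvalue (Matrix.toLin' A) r}
            ⊆ Set.range hA.eigenvalues by
          intro r hr; exact (eigset_eq hA ▸ hr.2 : r ∈ Set.range hA.eigenvalues))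
        exact (Set.finite_range _).bddBelow
      · exact ⟨h0, (eig_iff hA _).2 ⟨i, rfl⟩⟩
    exact mul_le_mul_of_nonneg_right hmem (sq_nonneg _)

end Spectral

section BLOCKCALC


variable {E : Type*} [NormedAddCommGroup E] [InnerProductSpace ℝ E] [CompleteSpace E]

/-- Symmetry of the Hessian (as derivative of the gradient). -/
lemma hess_symm {f : E → ℝ} {g : E → E} {h : E → (E →L[ℝ] E)}
    (hg : ∀ z, HasGradientAt f (g z) z) (hh : ∀ z, HasFDerivAt g (h z) z)
    (z : E) (u w : E) : ⟪(h z) u, w⟫_ℝ = ⟪(h z) w, u⟫_ℝ := by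
  set D : E →L[ℝ] (E →L[ℝ] ℝ) :=
    (InnerProductSpace.toDual ℝ E).toContinuousLinearEquiv.toContinuousLinearMap with hD
  have hf' : ∀ y, HasFDerivAt f ((fun y => D (g y)) y) y := by
    intro y
    have := (hg y).hasFDerivAt
    simpa [hD] using this
  have hf'' : HasFDerivAt (fun y => D (g y)) (D.comp (h z)) z := D.hasFDerivAt.comp z (hh z)
  have := second_derivative_symmetric hf' hf'' u w
  simpa [hD, InnerProductSpace.toDual_apply_apply] using this

lemma hess_op_bound {f : E → ℝ} {g : E → E} {h : E → (E →L[ℝ] E)}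
    (hg : ∀ z, HasGradientAt f (g z) z) (hh : ∀ z, HasFDerivAt g (h z) z)
    {μ L : ℝ} (hμ : 0 < μ) (hμL : μ ≤ L)
    (hlow : ∀ z w, μ * ‖w‖ ^ 2 ≤ ⟪(h z) w, w⟫_ℝ) (hup : ∀ z w, ⟪(h z) w, w⟫_ℝ ≤ L * ‖w‖ ^ 2)
    (z w : E) : ‖(h z) w‖ ≤ L * ‖w‖ := by
  have hsym : ∀ u w : E, ⟪((h z) : E →ₗ[ℝ] E) u, w⟫_ℝ = ⟪u, ((h z) : E →ₗ[ℝ] E) w⟫_ℝ := by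
    intro u w
    simp only [ContinuousLinearMap.coe_coe]
    rw [hess_symm hg hh z u w, real_inner_comm]
  have hb : ∀ w : E, |⟪((h z) : E →ₗ[ℝ] E) w, w⟫_ℝ| ≤ L * ‖w‖ ^ 2 := by
    intro w
    rw [abs_le]
    constructor
    · have h1 := hlow z w
      have : (0:ℝ) ≤ μ * ‖w‖^2 := by positivity
      have h3 : (0:ℝ) ≤ L * ‖w‖^2 := by nlinarith
      simp only [ContinuousLinearMap.coe_coe]
      linarith
    · simpa using hup z w
  simpa using sym_op_bound ((h z) : E →ₗ[ℝ] E) hsym L hb w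

lemma grad_lipschitz {f : E → ℝ} {g : E → E} {h : E → (E →L[ℝ] E)}
    (hg : ∀ z, HasGradientAt f (g z) z) (hh : ∀ z, HasFDerivAt g (h z) z)
    {μ L : ℝ} (hμ : 0 < μ) (hμL : μ ≤ L)
    (hlow : ∀ z w, μ * ‖w‖ ^ 2 ≤ ⟪(h z) w, w⟫_ℝ) (hup : ∀ z w, ⟪(h z) w, w⟫_ℝ ≤ L * ‖w‖ ^ 2)
    (a b : E) : ‖g a - g b‖ ≤ L * ‖a - b‖ := by
  apply Convex.norm_image_sub_le_of_norm_hasFDerivWithin_le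
    (f' := h) (fun x _ => (hh x).hasFDerivWithinAt) _ convex_univ (Set.mem_univ b) (Set.mem_univ a)
  intro x _
  apply ContinuousLinearMap.opNorm_le_bound _ (by nlinarith : (0:ℝ) ≤ L)
  exact hess_op_bound hg hh hμ hμL hlow hup x

lemma grad_strong_mono {f : E → ℝ} {g : E → E} {h : E → (E →L[ℝ] E)}
    (hg : ∀ z, HasGradientAt f (g z) z) (hh : ∀ z, HasFDerivAt g (h z) z)
    {μ : ℝ}
    (hlow : ∀ z w, μ * ‖w‖ ^ 2 ≤ ⟪(h z) w, w⟫_ℝ)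
    (a b : E) : μ * ‖a - b‖ ^ 2 ≤ ⟪g a - g b, a - b⟫_ℝ := by
  set d := a - b with hd
  set c : ℝ → E := fun s => b + s • d with hc
  have hderiv : ∀ s : ℝ, HasDerivAt (fun s : ℝ => ⟪d, g (c s)⟫_ℝ - μ * ‖d‖ ^ 2 * s)
      (⟪d, (h (c s)) d⟫_ℝ - μ * ‖d‖ ^ 2) s := by
    intro s
    have hcd : HasDerivAt c d s := by
      have : HasDerivAt (fun s : ℝ => s • d) ((1:ℝ) • d) s := (hasDerivAt_id s).smul_const d
      simpa [hc] using this.const_add b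
    have hgc : HasDerivAt (fun s => g (c s)) ((h (c s)) d) s := by
      have := (hh (c s)).comp_hasDerivAt s hcd
      simpa [Function.comp_def] using this
    have hinner : HasDerivAt (fun s => ⟪d, g (c s)⟫_ℝ) ⟪d, (h (c s)) d⟫_ℝ s := by
      have := (innerSL ℝ d).hasFDerivAt.comp_hasDerivAt s hgc
      simpa [Function.comp_def] using this
    simpa [Pi.sub_def] using hinner.sub ((hasDerivAt_id s).const_mul (μ * ‖d‖ ^ 2))
  have hmono : MonotoneOn (fun s : ℝ => ⟪d, g (c s)⟫_ℝ - μ * ‖d‖ ^ 2 * s) (Set.Icc 0 1) := by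
    apply monotoneOn_of_deriv_nonneg (convex_Icc 0 1)
    · apply Continuous.continuousOn
      rw [continuous_iff_continuousAt]
      exact fun s => (hderiv s).differentiableAt.continuousAt
    · intro s _
      exact (hderiv s).differentiableAt.differentiableWithinAt
    · intro s _
      rw [(hderiv s).deriv]
      have hlo := hlow (c s) d
      rw [real_inner_comm] at hlo
      linarith
  have h01 := hmono (Set.mem_Icc.2 ⟨le_refl 0, zero_le_one⟩)
    (Set.mem_Icc.2 ⟨zero_le_one, le_refl 1⟩) zero_le_one
  have hc0 : c 0 = b := by simp [hc]
  have hc1 : c 1 = a := by simp [hc, hd]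
  simp only [mul_zero, mul_one, sub_zero, hc0, hc1] at h01
  have hexp : ⟪g a - g b, a - b⟫_ℝ = ⟪d, g a⟫_ℝ - ⟪d, g b⟫_ℝ := by
    rw [inner_sub_left, real_inner_comm (g a) (a-b), real_inner_comm (g b) (a-b)]
  show μ * ‖a - b‖ ^ 2 ≤ ⟪g a - g b, a - b⟫_ℝ
  rw [hexp]
  have : ‖d‖ = ‖a - b‖ := by rw [hd]
  rw [← this]
  linarith

end BLOCKCALC

section Agg
variable {n p : ℕ}

lemma blk_sub (x y : Vnp n p) (i : Fin n) : blk (x - y) i = blk x i - blk y i := rfl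

lemma inner_blocks (u w : Vnp n p) : ⟪u, w⟫_ℝ = ∑ i, ⟪blk u i, blk w i⟫_ℝ := by
  simp only [PiLp.inner_apply, RCLike.inner_apply, starRingEnd_apply, star_trivial]
  rw [Fintype.sum_prod_type]
  rfl

lemma norm_sq_blocks (u : Vnp n p) : ‖u‖ ^ 2 = ∑ i, ‖blk u i‖ ^ 2 := by
  rw [← real_inner_self_eq_norm_sq, inner_blocks]
  exact Finset.sum_congr rfl fun i _ => real_inner_self_eq_norm_sq _

lemma blk_aggGrad (g : Fin n → Ep p → Ep p) (x : Vnp n p) (i : Fin n) :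
    blk (aggGrad g x) i = g i (blk x i) := rfl

lemma blk_aggHess (h : Fin n → Ep p → (Ep p →L[ℝ] Ep p)) (x w : Vnp n p) (i : Fin n) :
    blk (aggHess h x w) i = h i (blk x i) (blk w i) := rfl

variable {f : Fin n → Ep p → ℝ} {g : Fin n → Ep p → Ep p}
  {h : Fin n → Ep p → (Ep p →L[ℝ] Ep p)} {μ L : ℝ}

lemma agg_mono (hg : ∀ i z, HasGradientAt (f i) (g i z) z)
    (hh : ∀ i z, HasFDerivAt (g i) (h i z) z)
    (hlow : ∀ i z w, μ * ‖w‖ ^ 2 ≤ ⟪(h i z) w, w⟫_ℝ) (a b : Vnp n p) :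
    μ * ‖a - b‖ ^ 2 ≤ ⟪aggGrad g a - aggGrad g b, a - b⟫_ℝ := by
  rw [inner_blocks, norm_sq_blocks, Finset.mul_sum]
  apply Finset.sum_le_sum; intro i _
  rw [blk_sub, blk_sub, blk_aggGrad, blk_aggGrad]
  exact grad_strong_mono (hg i) (hh i) (hlow i) _ _

lemma agg_lip (hg : ∀ i z, HasGradientAt (f i) (g i z) z)
    (hh : ∀ i z, HasFDerivAt (g i) (h i z) z) (hμ : 0 < μ) (hμL : μ ≤ L)
    (hlow : ∀ i z w, μ * ‖w‖ ^ 2 ≤ ⟪(h i z) w, w⟫_ℝ)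
    (hup : ∀ i z w, ⟪(h i z) w, w⟫_ℝ ≤ L * ‖w‖ ^ 2) (a b : Vnp n p) :
    ‖aggGrad g a - aggGrad g b‖ ≤ L * ‖a - b‖ := by
  have hL : 0 ≤ L := le_trans hμ.le hμL
  have h2 : ‖aggGrad g a - aggGrad g b‖ ^ 2 ≤ (L * ‖a - b‖) ^ 2 := by
    rw [norm_sq_blocks, mul_pow, norm_sq_blocks (a - b), Finset.mul_sum]
    apply Finset.sum_le_sum; intro i _
    rw [blk_sub, blk_sub, blk_aggGrad, blk_aggGrad]
    have := grad_lipschitz (hg i) (hh i) hμ hμL (hlow i) (hup i) (blk a i) (blk b i)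
    calc ‖g i (blk a i) - g i (blk b i)‖ ^ 2 ≤ (L * ‖blk a i - blk b i‖) ^ 2 :=
      pow_le_pow_left₀ (norm_nonneg _) this 2
    _ = L ^ 2 * ‖blk a i - blk b i‖ ^ 2 := by ring
  have hge : 0 ≤ L * ‖a - b‖ := by positivity
  exact (pow_le_pow_iff_left₀ (norm_nonneg _) hge two_ne_zero).1 h2

lemma agg_hess_bound (hg : ∀ i z, HasGradientAt (f i) (g i z) z)
    (hh : ∀ i z, HasFDerivAt (g i) (h i z) z) (hμ : 0 < μ) (hμL : μ ≤ L)
    (hlow : ∀ i z w, μ * ‖w‖ ^ 2 ≤ ⟪(h i z) w, w⟫_ℝ)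
    (hup : ∀ i z w, ⟪(h i z) w, w⟫_ℝ ≤ L * ‖w‖ ^ 2) (z w : Vnp n p) :
    ‖aggHess h z w‖ ≤ L * ‖w‖ := by
  have hL : 0 ≤ L := le_trans hμ.le hμL
  have h2 : ‖aggHess h z w‖ ^ 2 ≤ (L * ‖w‖) ^ 2 := by
    rw [norm_sq_blocks, mul_pow, norm_sq_blocks w, Finset.mul_sum]
    apply Finset.sum_le_sum; intro i _
    rw [blk_aggHess]
    have := hess_op_bound (hg i) (hh i) hμ hμL (hlow i) (hup i) (blk z i) (blk w i)
    calc ‖(h i (blk z i)) (blk w i)‖ ^ 2 ≤ (L * ‖blk w i‖) ^ 2 :=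
      pow_le_pow_left₀ (norm_nonneg _) this 2
    _ = L ^ 2 * ‖blk w i‖ ^ 2 := by ring
  have hge : 0 ≤ L * ‖w‖ := by positivity
  exact (pow_le_pow_iff_left₀ (norm_nonneg _) hge two_ne_zero).1 h2

end Agg


set_option maxHeartbeats 1600000 in
/-- Linear convergence of the primal iterates:
`‖x^t − x*‖² ≤ (1/(ε − α·λ_max(I−𝐖)))·(1/(1+δ'))^t·‖ζ⁰ − ζ*‖²_G`. -/
theorem newton_tracking_primal_linear_convergence
    {n p : ℕ} (hn : 0 < n) (hp : 0 < p)
    (W : Matrix (Fin n) (Fin n) ℝ)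
    (hWnonneg : ∀ i j, 0 ≤ W i j) (hWsymm : W.IsSymm)
    (hWstoch : W *ᵥ (fun _ => (1 : ℝ)) = fun _ => 1)
    (hWker : ∀ y : Fin n → ℝ, (1 - W) *ᵥ y = 0 ↔ ∃ c : ℝ, y = fun _ => c)
    (hpsd : (IWmat p W).PosSemidef)
    (f : Fin n → Ep p → ℝ) (g : Fin n → Ep p → Ep p)
    (h : Fin n → Ep p → (Ep p →L[ℝ] Ep p))
    (μf Lf : ℝ) (hμpos : 0 < μf) (hμL : μf ≤ Lf)
    (hC2 : ∀ i, ContDiff ℝ 2 (f i))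
    (hg : ∀ i z, HasGradientAt (f i) (g i z) z)
    (hh : ∀ i z, HasFDerivAt (g i) (h i z) z)
    (hlow : ∀ i z w, μf * ‖w‖ ^ 2 ≤ ⟪(h i z) w, w⟫_ℝ)
    (hup : ∀ i z w, ⟪(h i z) w, w⟫_ℝ ≤ Lf * ‖w‖ ^ 2)
    (α ε : ℝ) (hα : 0 < α) (hε : 0 < ε)
    (x v : ℕ → Vnp n p)
    (hprimal : ∀ t, aggHess h (x t) (x t - x (t + 1)) + ε • (x t - x (t + 1)) =
      aggGrad g (x t) + Matrix.toEuclideanLin hpsd.sqrt (v t)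
        + α • Matrix.toEuclideanLin (IWmat p W) (x t))
    (hdual : ∀ t, v (t + 1) = v t + α • Matrix.toEuclideanLin hpsd.sqrt (x (t + 1)))
    (xs vs : Vnp n p)
    (hK1 : aggGrad g xs + Matrix.toEuclideanLin hpsd.sqrt vs = 0)
    (hK2 : Matrix.toEuclideanLin hpsd.sqrt xs = 0)
    (hcond : 4 * Lf ^ 2 / μf < ε - α * lamMax (IWmat p W))
    (hv0 : v 0 = 0)
    (hvscol : ∃ y : Vnp n p, vs = Matrix.toEuclideanLin hpsd.sqrt y)
    (β φ : ℝ) (hβ : 1 < β) (hφ : 1 < φ)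
    (hδ'pos : 0 < deltaNT' μf Lf α ε (lamMax (IWmat p W)) (lamMinNZ (IWmat p W)) β φ) :
    ∀ t : ℕ,
      ‖x t - xs‖ ^ 2 ≤ (1 / (ε - α * lamMax (IWmat p W))) *
        (1 / (1 + deltaNT' μf Lf α ε (lamMax (IWmat p W)) (lamMinNZ (IWmat p W)) β φ)) ^ t *
        (⟪x 0 - xs, ε • (x 0 - xs) - α • Matrix.toEuclideanLin (IWmat p W) (x 0 - xs)⟫_ℝ
          + (1 / α) * ‖v 0 - vs‖ ^ 2) := by
  haveI hne : Nonempty (Fin n × Fin p) := ⟨(⟨0, hn⟩, ⟨0, hp⟩)⟩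
  have hherm : (IWmat p W).IsHermitian := hpsd.1
  have hSherm : (hpsd.sqrt).IsHermitian := hpsd.sqrt_isHermitian
  set Sop := Matrix.toEuclideanLin hpsd.sqrt with hSop
  set Aop := Matrix.toEuclideanLin (IWmat p W) with hAopdef
  set lm := lamMax (IWmat p W) with hlmdef
  set lh := lamMinNZ (IWmat p W) with hlhdef
  set δ' := deltaNT' μf Lf α ε lm lh β φ with hδ'def
  set s := ε - α * lm with hsdef
  set δ := deltaNT μf Lf α ε lm with hδdef
  -- scalar basics
  have hLf : 0 < Lf := lt_of_lt_of_le hμpos hμL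
  have hspos : 0 < s := lt_trans (div_pos (by nlinarith : (0:ℝ) < 4 * Lf ^ 2) hμpos) hcond
  have hδeq : δ = 1 - 4 * Lf ^ 2 / (μf * s) := by rw [hδdef, hsdef]; rfl
  have hmuspos : 0 < μf * s := mul_pos hμpos hspos
  have h4L : 4 * Lf ^ 2 < μf * s := by
    have h := (div_lt_iff₀ hμpos).1 hcond; linarith
  have hδpos2 : 0 < δ := by
    rw [hδeq]
    have : 4 * Lf ^ 2 / (μf * s) < 1 := (div_lt_one hmuspos).2 h4L
    linarith
  have hδlt1 : δ < 1 := by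
    rw [hδeq]
    have : 0 < 4 * Lf ^ 2 / (μf * s) := div_pos (by nlinarith) hmuspos
    linarith
  have hδid : 4 * Lf ^ 2 = μf * s * (1 - δ) := by
    rw [hδeq]; field_simp; ring
  have hlm0 : 0 ≤ lm := lamMax_nonneg hpsd
  have hβ1 : 0 < β - 1 := by linarith
  have hφ1 : 0 < φ - 1 := by linarith
  have hβ0 : 0 < β := by linarith
  have hφ0 : 0 < φ := by linarith
  have hdenom : 0 < β * ε ^ 2 / (β - 1) + β * φ * (2 * Lf + α * lm) ^ 2 / (φ - 1) :=
    add_pos_of_pos_of_nonneg (by positivity) (by positivity)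
  have hmin : δ' = min (μf * δ / ((1 + δ) * (ε + β * φ * Lf ^ 2 / (α * lh))))
      (α * δ ^ 2 * s * lh /
        (β * ε ^ 2 / (β - 1) + β * φ * (2 * Lf + α * lm) ^ 2 / (φ - 1))) := by
    rw [hδ'def, hδdef, hsdef]; rfl
  have ht1 : δ' ≤ μf * δ / ((1 + δ) * (ε + β * φ * Lf ^ 2 / (α * lh))) :=
    hmin ▸ min_le_left _ _
  have ht2 : δ' ≤ α * δ ^ 2 * s * lh /
      (β * ε ^ 2 / (β - 1) + β * φ * (2 * Lf + α * lm) ^ 2 / (φ - 1)) :=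
    hmin ▸ min_le_right _ _
  have hlhpos : 0 < lh := by
    by_contra hle
    push_neg at hle
    have hfac : (0:ℝ) ≤ α * δ ^ 2 * s := by positivity
    have hnum : α * δ ^ 2 * s * lh ≤ 0 := by
      have h0 := mul_le_mul_of_nonneg_left hle hfac
      rw [mul_zero] at h0
      calc α * δ ^ 2 * s * lh = α * δ ^ 2 * s * lh := rfl
      _ ≤ 0 := by linarith only [h0]
    have hneg : α * δ ^ 2 * s * lh /
        (β * ε ^ 2 / (β - 1) + β * φ * (2 * Lf + α * lm) ^ 2 / (φ - 1)) ≤ 0 :=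
      div_nonpos_of_nonpos_of_nonneg hnum hdenom.le
    linarith only [hδ'pos, ht2, hneg]
  have hαlh : 0 < α * lh := mul_pos hα hlhpos
  -- operator facts
  have hAsym : ∀ u w : Vnp n p, ⟪Aop u, w⟫_ℝ = ⟪u, Aop w⟫_ℝ := fun u w => tEL_symm hherm u w
  have hSsym : ∀ u w : Vnp n p, ⟪Sop u, w⟫_ℝ = ⟪u, Sop w⟫_ℝ := fun u w => tEL_symm hSherm u w
  have hSS : ∀ y : Vnp n p, Aop y = Sop (Sop y) := by
    intro y
    rw [hAopdef, hSop]
    apply WithLp.ofLp_injective 2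
    simp only [tEL_apply]
    rw [Matrix.mulVec_mulVec, hpsd.sqrt_mul_self]
  have hquadA_ub : ∀ y : Vnp n p, ⟪y, Aop y⟫_ℝ ≤ lm * ‖y‖ ^ 2 := fun y => quad_le_lamMax hherm y
  have hquadA_lb : ∀ y : Vnp n p, 0 ≤ ⟪y, Aop y⟫_ℝ := fun y => psd_quad_nonneg hpsd y
  have hAnorm : ∀ y : Vnp n p, ‖Aop y‖ ≤ lm * ‖y‖ := by
    intro y
    apply sym_op_bound (Aop : Vnp n p →ₗ[ℝ] Vnp n p) (fun u w => hAsym u w) lm _ y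
    intro w
    rw [abs_le]
    constructor
    · have h1 := hquadA_lb w
      have h2 : ⟪Aop w, w⟫_ℝ = ⟪w, Aop w⟫_ℝ := real_inner_comm _ _
      have h3 : (0:ℝ) ≤ lm * ‖w‖ ^ 2 := by positivity
      simp only [LinearMap.coe_coe] at *
      linarith only [h1, h2, h3]
    · have h2 : ⟪Aop w, w⟫_ℝ = ⟪w, Aop w⟫_ℝ := real_inner_comm _ _
      have h4 := hquadA_ub w
      simp only [LinearMap.coe_coe] at *
      linarith only [h2, h4]
  have hker : ∀ k : Vnp n p, Aop k = 0 → Sop k = 0 := by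
    intro k hk
    have h1 : ⟪Sop k, Sop k⟫_ℝ = ⟪k, Aop k⟫_ℝ := by rw [hSS k, hSsym]
    rw [hk, inner_zero_right] at h1
    exact inner_self_eq_zero.1 h1
  -- range invariant for v t - vs
  have hrange : ∀ t, ∀ k : Vnp n p, Aop k = 0 → ⟪v t - vs, k⟫_ℝ = 0 := by
    intro t
    induction t with
    | zero =>
      intro k hk
      obtain ⟨y, hy⟩ := hvscol
      rw [hv0, hy, zero_sub, inner_neg_left, hSsym y k, hker k hk, inner_zero_right, neg_zero]
    | succ t ih =>
      intro k hk
      have hsplit : v (t+1) - vs = (v t - vs) + α • Sop (x (t+1)) := by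
        rw [hdual t]; abel
      rw [hsplit, inner_add_left, ih k hk, real_inner_smul_left, hSsym, hker k hk,
        inner_zero_right, mul_zero, add_zero]
  -- quadratic form bounds for Q = εI - αA
  have hQlb : ∀ y : Vnp n p, s * ‖y‖ ^ 2 ≤ ⟪y, ε • y - α • Aop y⟫_ℝ := by
    intro y
    rw [inner_sub_right, real_inner_smul_right, real_inner_smul_right,
      real_inner_self_eq_norm_sq, hsdef]
    linarith only [mul_le_mul_of_nonneg_left (hquadA_ub y) hα.le]
  have hQub : ∀ y : Vnp n p, ⟪y, ε • y - α • Aop y⟫_ℝ ≤ ε * ‖y‖ ^ 2 := by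
    intro y
    rw [inner_sub_right, real_inner_smul_right, real_inner_smul_right,
      real_inner_self_eq_norm_sq]
    linarith only [mul_le_mul_of_nonneg_left (hquadA_lb y) hα.le]
  -- aggregate analytic facts
  have hmono := fun a b => agg_mono hg hh hlow a b
  have hlip := fun a b => agg_lip hg hh hμpos hμL hlow hup a b
  have hhessb := fun z w => agg_hess_bound hg hh hμpos hμL hlow hup z w
  -- ================== the one-step contraction ==================
  have hstep : ∀ t, (1 + δ') *
      (⟪x (t+1) - xs, ε • (x (t+1) - xs) - α • Aop (x (t+1) - xs)⟫_ℝ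
        + 1 / α * ‖v (t+1) - vs‖ ^ 2) ≤
      ⟪x t - xs, ε • (x t - xs) - α • Aop (x t - xs)⟫_ℝ + 1 / α * ‖v t - vs‖ ^ 2 := by
    intro t
    have h2 := hdual t
    set a := x (t+1) - xs with ha
    set b := x t - xs with hb
    set Δ := x t - x (t+1) with hΔ
    set av := v (t+1) - vs with hav
    set bv := v t - vs with hbv
    set Gd := aggGrad g (x (t+1)) - aggGrad g xs with hGd
    set E := aggHess h (x t) Δ - (aggGrad g (x t) - aggGrad g (x (t+1))) with hEdef
    have hbaeq : b = a + Δ := by rw [ha, hb, hΔ]; abel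
    -- key identity F1
    have hSvs : Sop vs = -aggGrad g xs := by
      have := hK1
      have h4 : aggGrad g xs + Sop vs - aggGrad g xs = 0 - aggGrad g xs := by rw [this]
      rw [zero_sub] at h4
      rw [← h4]; abel
    have hHess : aggHess h (x t) Δ
        = aggGrad g (x t) + Sop (v t) + α • Aop (x t) - ε • Δ := by
      have h1 := hprimal t
      have := congrArg (fun z => z - ε • Δ) h1
      rw [← h1, add_sub_cancel_right]
    have hF1 : ε • Δ - α • Aop Δ + E = Gd + Sop av := by
      rw [hEdef, hHess, hGd, hav, map_sub Sop (v (t+1)) vs, h2, map_add, _root_.map_smul,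
        ← hSS, hSvs, hΔ, map_sub Aop (x t) (x (t+1))]
      module
    -- F2
    have hvdiff : av - bv = α • Sop (x (t+1)) := by rw [hav, hbv, h2]; abel
    have hSa : Sop a = Sop (x (t+1)) := by rw [ha, map_sub, hK2, sub_zero]
    have hF2 : ⟪a, ε • Δ - α • Aop Δ⟫_ℝ + 1 / α * ⟪av, bv - av⟫_ℝ
        = ⟪a, Gd⟫_ℝ - ⟪a, E⟫_ℝ := by
      have h3 := congrArg (fun z => ⟪a, z⟫_ℝ) hF1
      simp only [inner_add_right] at h3
      have h4 : ⟪a, Sop av⟫_ℝ = 1 / α * ⟪av - bv, av⟫_ℝ := by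
        rw [← hSsym, hSa]
        have h5 : Sop (x (t+1)) = (1 / α) • (av - bv) := by
          rw [hvdiff, smul_smul, one_div, inv_mul_cancel₀ (ne_of_gt hα), one_smul]
        rw [h5, real_inner_smul_left]
      have h6 : ⟪av - bv, av⟫_ℝ = -⟪av, bv - av⟫_ℝ := inner_sub_self_right av bv
      rw [h4, h6] at h3
      linarith only [h3]
    -- drop identity
    have hsymΔa : ⟪Δ, Aop a⟫_ℝ = ⟪a, Aop Δ⟫_ℝ := by
      rw [← hAsym Δ a, real_inner_comm]
    have hbv' : bv = av + (bv - av) := by abel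
    have hnb : ‖bv‖ ^ 2 = ‖av‖ ^ 2 + 2 * ⟪av, bv - av⟫_ℝ + ‖bv - av‖ ^ 2 := by
      conv_lhs => rw [hbv']
      exact norm_add_sq_real _ _
    have hQb2 : ⟪b, ε • b - α • Aop b⟫_ℝ
        = ⟪a, ε • a - α • Aop a⟫_ℝ + 2 * ⟪a, ε • Δ - α • Aop Δ⟫_ℝ
          + ⟪Δ, ε • Δ - α • Aop Δ⟫_ℝ := by
      rw [hbaeq]
      exact Qform_expand Aop hAsym ε α a Δ
    have hdropid : (⟪b, ε • b - α • Aop b⟫_ℝ + 1 / α * ‖bv‖ ^ 2)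
        - (⟪a, ε • a - α • Aop a⟫_ℝ + 1 / α * ‖av‖ ^ 2)
        = 2 * ⟪a, ε • Δ - α • Aop Δ⟫_ℝ + ⟪Δ, ε • Δ - α • Aop Δ⟫_ℝ
          + 1 / α * (2 * ⟪av, bv - av⟫_ℝ + ‖bv - av‖ ^ 2) := by
      rw [hQb2, hnb]; ring
    have hdropid2 : (⟪b, ε • b - α • Aop b⟫_ℝ + 1 / α * ‖bv‖ ^ 2)
        - (⟪a, ε • a - α • Aop a⟫_ℝ + 1 / α * ‖av‖ ^ 2)
        = 2 * ⟪a, Gd⟫_ℝ + (-2) * ⟪a, E⟫_ℝ + ⟪Δ, ε • Δ - α • Aop Δ⟫_ℝ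
          + 1 / α * ‖bv - av‖ ^ 2 := by
      linear_combination hdropid + 2 * hF2
    -- scalar quantities
    set X := ‖a‖ with hX
    set D := ‖Δ‖ with hD
    have hX0 : 0 ≤ X := norm_nonneg _
    have hD0 : 0 ≤ D := norm_nonneg _
    have hGdb : ‖Gd‖ ≤ Lf * X := by
      have := hlip (x (t+1)) xs
      rw [← hGd, ← ha, ← hX] at this
      exact this
    have hEb : ‖E‖ ≤ 2 * Lf * D := by
      rw [hEdef]
      refine le_trans (norm_sub_le _ _) ?_
      have h7 := hhessb (x t) Δ
      have h8 := hlip (x t) (x (t+1))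
      rw [← hΔ] at h8
      rw [← hD] at h7 h8
      linarith
    have hmonoa : μf * X ^ 2 ≤ ⟪a, Gd⟫_ℝ := by
      have h9 := hmono (x (t+1)) xs
      rw [← hGd, ← ha, ← hX] at h9
      rw [real_inner_comm]
      exact h9
    have haE : |⟪a, E⟫_ℝ| ≤ X * (2 * Lf * D) := by
      refine le_trans (abs_real_inner_le_norm a E) ?_
      exact mul_le_mul_of_nonneg_left hEb (norm_nonneg a)
    have hQΔ : s * D ^ 2 ≤ ⟪Δ, ε • Δ - α • Aop Δ⟫_ℝ := hQlb Δ
    have hdrop_ge : 2 * μf * X ^ 2 - 4 * Lf * X * D + s * D ^ 2 ≤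
        (⟪b, ε • b - α • Aop b⟫_ℝ + 1 / α * ‖bv‖ ^ 2)
          - (⟪a, ε • a - α • Aop a⟫_ℝ + 1 / α * ‖av‖ ^ 2) := by
      rw [hdropid2]
      have h10 : (0:ℝ) ≤ 1 / α * ‖bv - av‖ ^ 2 := by positivity
      have h12 := (abs_le.1 haE).2
      calc 2 * μf * X ^ 2 - 4 * Lf * X * D + s * D ^ 2
          = 2 * (μf * X ^ 2) + (-2) * (X * (2 * Lf * D)) + s * D ^ 2 + 0 := by ring
        _ ≤ 2 * ⟪a, Gd⟫_ℝ + (-2) * ⟪a, E⟫_ℝ + ⟪Δ, ε • Δ - α • Aop Δ⟫_ℝ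
              + 1 / α * ‖bv - av‖ ^ 2 := by
            refine add_le_add (add_le_add (add_le_add ?_ ?_) hQΔ) h10
            · exact mul_le_mul_of_nonneg_left hmonoa (by norm_num)
            · exact mul_le_mul_of_nonpos_left h12 (by norm_num)
    -- upper bound on the new G-norm
    have hyav : ∀ k : Vnp n p, Aop k = 0 → ⟪k, av⟫_ℝ = 0 := by
      intro k hk
      rw [real_inner_comm, hav]
      exact hrange (t+1) k hk
    have hqlh : lh * ‖av‖ ^ 2 ≤ ‖Sop av‖ ^ 2 := by
      have h10 := quad_ge_lamMinNZ hherm av hyav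
      rw [← hlhdef] at h10
      have h11 : ⟪av, Aop av⟫_ℝ = ‖Sop av‖ ^ 2 := by
        rw [hSS, ← hSsym, real_inner_self_eq_norm_sq]
      linarith
    have hSav : ‖Sop av‖ ^ 2 ≤ β * ε ^ 2 / (β - 1) * D ^ 2
        + β * φ / (φ - 1) * (2 * Lf + α * lm) ^ 2 * D ^ 2 + β * φ * Lf ^ 2 * X ^ 2 := by
      have hrw : Sop av = ε • Δ + ((E - α • Aop Δ) + (-Gd)) := by
        have h14 : Sop av = (ε • Δ - α • Aop Δ + E) - Gd := by
          rw [eq_sub_iff_add_eq, add_comm (Sop av) Gd, ← hF1]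
        rw [h14]; module
      rw [hrw]
      have hp1 := norm_add_sq_peter_paul (ε • Δ) ((E - α • Aop Δ) + (-Gd)) β hβ
      have hp2 := norm_add_sq_peter_paul (E - α • Aop Δ) (-Gd) φ hφ
      have hn1 : ‖ε • Δ‖ ^ 2 = ε ^ 2 * D ^ 2 := by
        rw [norm_smul, Real.norm_eq_abs, abs_of_pos hε, mul_pow, hD]
      have hn2 : ‖E - α • Aop Δ‖ ≤ (2 * Lf + α * lm) * D := by
        refine le_trans (norm_sub_le _ _) ?_
        have h13 := hAnorm Δ
        rw [← hD] at h13
        rw [norm_smul, Real.norm_eq_abs, abs_of_pos hα]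
        linarith only [hEb, mul_le_mul_of_nonneg_left h13 hα.le]
      have hn2' : ‖E - α • Aop Δ‖ ^ 2 ≤ (2 * Lf + α * lm) ^ 2 * D ^ 2 := by
        have h14 := pow_le_pow_left₀ (norm_nonneg (E - α • Aop Δ)) hn2 2
        rw [mul_pow] at h14
        exact h14
      have hn3 : ‖-Gd‖ ^ 2 ≤ Lf ^ 2 * X ^ 2 := by
        rw [norm_neg]
        have h14 := pow_le_pow_left₀ (norm_nonneg Gd) hGdb 2
        rw [mul_pow] at h14
        exact h14
      have hchain : ‖(E - α • Aop Δ) + (-Gd)‖ ^ 2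
          ≤ φ / (φ - 1) * ((2 * Lf + α * lm) ^ 2 * D ^ 2) + φ * (Lf ^ 2 * X ^ 2) := by
        refine le_trans hp2 ?_
        have hc1 : (0:ℝ) ≤ φ / (φ - 1) := by positivity
        linarith only [mul_le_mul_of_nonneg_left hn2' hc1,
          mul_le_mul_of_nonneg_left hn3 hφ0.le]
      refine le_trans hp1 ?_
      have hc3 := mul_le_mul_of_nonneg_left hchain hβ0.le
      rw [hn1]
      calc β / (β - 1) * (ε ^ 2 * D ^ 2) + β * ‖E - α • Aop Δ + -Gd‖ ^ 2
          ≤ β / (β - 1) * (ε ^ 2 * D ^ 2)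
            + β * (φ / (φ - 1) * ((2 * Lf + α * lm) ^ 2 * D ^ 2) + φ * (Lf ^ 2 * X ^ 2)) := by
            exact add_le_add le_rfl hc3
        _ = β * ε ^ 2 / (β - 1) * D ^ 2 + β * φ / (φ - 1) * (2 * Lf + α * lm) ^ 2 * D ^ 2
            + β * φ * Lf ^ 2 * X ^ 2 := by ring
    have hva : 1 / α * ‖av‖ ^ 2 ≤ 1 / (α * lh) * ‖Sop av‖ ^ 2 := by
      have hc4 : (0:ℝ) < 1 / (α * lh) := by positivity
      have h15 := mul_le_mul_of_nonneg_left hqlh hc4.le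
      have heq4 : 1 / (α * lh) * (lh * ‖av‖ ^ 2) = 1 / α * ‖av‖ ^ 2 := by
        field_simp
      rw [heq4] at h15
      exact h15
    have hGNa_ub : ⟪a, ε • a - α • Aop a⟫_ℝ + 1 / α * ‖av‖ ^ 2
        ≤ (ε + β * φ * Lf ^ 2 / (α * lh)) * X ^ 2
          + 1 / (α * lh) * (β * ε ^ 2 / (β - 1) + β * φ * (2 * Lf + α * lm) ^ 2 / (φ - 1))
            * D ^ 2 := by
      have h16 := hQub a
      rw [← hX] at h16
      have hc4 : (0:ℝ) ≤ 1 / (α * lh) := by positivity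
      have h17 := mul_le_mul_of_nonneg_left hSav hc4
      have heq5 : 1 / (α * lh) * (β * ε ^ 2 / (β - 1) * D ^ 2
          + β * φ / (φ - 1) * (2 * Lf + α * lm) ^ 2 * D ^ 2 + β * φ * Lf ^ 2 * X ^ 2)
          = β * φ * Lf ^ 2 / (α * lh) * X ^ 2
            + 1 / (α * lh) * (β * ε ^ 2 / (β - 1) + β * φ * (2 * Lf + α * lm) ^ 2 / (φ - 1))
              * D ^ 2 := by
        field_simp
        ring
      rw [heq5] at h17
      linarith only [h16, hva, h17]
    -- scalar endgame
    have hc1pos : 0 < ε + β * φ * Lf ^ 2 / (α * lh) := by positivity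
    have hd1 : δ' * (ε + β * φ * Lf ^ 2 / (α * lh)) ≤ μf * δ / (1 + δ) := by
      have h18 := mul_le_mul_of_nonneg_right ht1 hc1pos.le
      have heq6 : μf * δ / ((1 + δ) * (ε + β * φ * Lf ^ 2 / (α * lh)))
          * (ε + β * φ * Lf ^ 2 / (α * lh)) = μf * δ / (1 + δ) := by
        have h1δ : (0:ℝ) < 1 + δ := by linarith
        field_simp
      rw [heq6] at h18
      exact h18
    have hKpos : 0 ≤ 1 / (α * lh) * (β * ε ^ 2 / (β - 1)
        + β * φ * (2 * Lf + α * lm) ^ 2 / (φ - 1)) := by positivity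
    have hd2 : δ' * (1 / (α * lh) * (β * ε ^ 2 / (β - 1)
        + β * φ * (2 * Lf + α * lm) ^ 2 / (φ - 1))) ≤ δ ^ 2 * s := by
      have h19 := mul_le_mul_of_nonneg_right ht2 hKpos
      have heq7 : α * δ ^ 2 * s * lh /
          (β * ε ^ 2 / (β - 1) + β * φ * (2 * Lf + α * lm) ^ 2 / (φ - 1))
          * (1 / (α * lh) * (β * ε ^ 2 / (β - 1)
            + β * φ * (2 * Lf + α * lm) ^ 2 / (φ - 1))) = δ ^ 2 * s := by
        field_simp
      rw [heq7] at h19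
      exact h19
    have hδ'GNa : δ' * (⟪a, ε • a - α • Aop a⟫_ℝ + 1 / α * ‖av‖ ^ 2)
        ≤ μf * δ / (1 + δ) * X ^ 2 + δ ^ 2 * s * D ^ 2 := by
      have h20 := mul_le_mul_of_nonneg_left hGNa_ub hδ'pos.le
      have h21 : δ' * ((ε + β * φ * Lf ^ 2 / (α * lh)) * X ^ 2
          + 1 / (α * lh) * (β * ε ^ 2 / (β - 1) + β * φ * (2 * Lf + α * lm) ^ 2 / (φ - 1))
            * D ^ 2)
          = δ' * (ε + β * φ * Lf ^ 2 / (α * lh)) * X ^ 2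
            + δ' * (1 / (α * lh) * (β * ε ^ 2 / (β - 1)
              + β * φ * (2 * Lf + α * lm) ^ 2 / (φ - 1))) * D ^ 2 := by ring
      rw [h21] at h20
      have h22 := mul_le_mul_of_nonneg_right hd1 (sq_nonneg X)
      have h23 := mul_le_mul_of_nonneg_right hd2 (sq_nonneg D)
      linarith only [h20, h22, h23]
    have hyoung : μf * δ / (1 + δ) * X ^ 2 + δ ^ 2 * s * D ^ 2
        ≤ 2 * μf * X ^ 2 - 4 * Lf * X * D + s * D ^ 2 := by
      have h1δ : (0:ℝ) < 1 + δ := by linarith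
      rw [← sub_nonneg]
      have hex : 2 * μf * X ^ 2 - 4 * Lf * X * D + s * D ^ 2
          - (μf * δ / (1 + δ) * X ^ 2 + δ ^ 2 * s * D ^ 2)
          = (μf * (2 + δ) * X ^ 2 - 4 * Lf * (1 + δ) * X * D
            + s * (1 - δ ^ 2) * (1 + δ) * D ^ 2) / (1 + δ) := by
        field_simp
        ring
      rw [hex]
      apply div_nonneg _ h1δ.le
      have hsub : μf * s * (1 - δ) * ((1 + δ) ^ 2 * D ^ 2)
          = 4 * Lf ^ 2 * ((1 + δ) ^ 2 * D ^ 2) := by rw [← hδid]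
      have hm1 : (0:ℝ) ≤ μf * μf * X ^ 2 :=
        mul_nonneg (mul_nonneg hμpos.le hμpos.le) (sq_nonneg X)
      have hm2 : (0:ℝ) ≤ μf * μf * δ * X ^ 2 :=
        mul_nonneg (mul_nonneg (mul_nonneg hμpos.le hμpos.le) hδpos2.le) (sq_nonneg X)
      have hkey : 0 ≤ μf * (μf * (2 + δ) * X ^ 2 - 4 * Lf * (1 + δ) * X * D
          + s * (1 - δ ^ 2) * (1 + δ) * D ^ 2) := by
        nlinarith only [sq_nonneg (μf * X - 2 * Lf * (1 + δ) * D), hsub, hm1, hm2]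
      have hdiv := div_nonneg hkey hμpos.le
      rw [mul_div_cancel_left₀ _ (ne_of_gt hμpos)] at hdiv
      exact hdiv
    have hfinal : (1 + δ') * (⟪a, ε • a - α • Aop a⟫_ℝ + 1 / α * ‖av‖ ^ 2)
        = (⟪a, ε • a - α • Aop a⟫_ℝ + 1 / α * ‖av‖ ^ 2)
          + δ' * (⟪a, ε • a - α • Aop a⟫_ℝ + 1 / α * ‖av‖ ^ 2) := by ring
    rw [hfinal]
    linarith only [hdrop_ge, hδ'GNa, hyoung]
  -- ================== conclusion ==================
  have h1δ' : (0:ℝ) < 1 + δ' := by linarith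
  have hgeom : ∀ t, ⟪x t - xs, ε • (x t - xs) - α • Aop (x t - xs)⟫_ℝ
      + 1 / α * ‖v t - vs‖ ^ 2
      ≤ (1 / (1 + δ')) ^ t *
        (⟪x 0 - xs, ε • (x 0 - xs) - α • Aop (x 0 - xs)⟫_ℝ + 1 / α * ‖v 0 - vs‖ ^ 2) := by
    intro t
    induction t with
    | zero => simp
    | succ t ih =>
      have h1 := hstep t
      have h2 : ⟪x (t+1) - xs, ε • (x (t+1) - xs) - α • Aop (x (t+1) - xs)⟫_ℝ
          + 1 / α * ‖v (t+1) - vs‖ ^ 2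
          ≤ 1 / (1 + δ') * (⟪x t - xs, ε • (x t - xs) - α • Aop (x t - xs)⟫_ℝ
            + 1 / α * ‖v t - vs‖ ^ 2) := by
        have hpos : (0:ℝ) < 1 / (1 + δ') := by positivity
        have h2' := mul_le_mul_of_nonneg_left h1 hpos.le
        rw [← mul_assoc, one_div_mul_cancel (ne_of_gt h1δ'), one_mul] at h2'
        exact h2'
      calc ⟪x (t+1) - xs, ε • (x (t+1) - xs) - α • Aop (x (t+1) - xs)⟫_ℝ
          + 1 / α * ‖v (t+1) - vs‖ ^ 2 ≤ _ := h2
      _ ≤ 1 / (1 + δ') * ((1 / (1 + δ')) ^ t *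
          (⟪x 0 - xs, ε • (x 0 - xs) - α • Aop (x 0 - xs)⟫_ℝ + 1 / α * ‖v 0 - vs‖ ^ 2)) := by
        apply mul_le_mul_of_nonneg_left ih (by positivity)
      _ = (1 / (1 + δ')) ^ (t+1) *
          (⟪x 0 - xs, ε • (x 0 - xs) - α • Aop (x 0 - xs)⟫_ℝ + 1 / α * ‖v 0 - vs‖ ^ 2) := by
        ring
  intro t
  have hx := hQlb (x t - xs)
  have hv2 : (0:ℝ) ≤ 1 / α * ‖v t - vs‖ ^ 2 := by positivity
  have hG := hgeom t
  have hfin : s * ‖x t - xs‖ ^ 2 ≤ (1 / (1 + δ')) ^ t *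
      (⟪x 0 - xs, ε • (x 0 - xs) - α • Aop (x 0 - xs)⟫_ℝ + 1 / α * ‖v 0 - vs‖ ^ 2) := by
    calc s * ‖x t - xs‖ ^ 2 ≤ ⟪x t - xs, ε • (x t - xs) - α • Aop (x t - xs)⟫_ℝ := hx
      _ ≤ ⟪x t - xs, ε • (x t - xs) - α • Aop (x t - xs)⟫_ℝ + 1 / α * ‖v t - vs‖ ^ 2 :=
          le_add_of_nonneg_right hv2
      _ ≤ _ := hG
  calc ‖x t - xs‖ ^ 2
      ≤ (1 / (1 + δ')) ^ t *
        (⟪x 0 - xs, ε • (x 0 - xs) - α • Aop (x 0 - xs)⟫_ℝ + 1 / α * ‖v 0 - vs‖ ^ 2) / s := by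
        rw [le_div_iff₀ hspos]
        linarith only [hfin]
    _ = 1 / s * (1 / (1 + δ')) ^ t *
        (⟪x 0 - xs, ε • (x 0 - xs) - α • Aop (x 0 - xs)⟫_ℝ + 1 / α * ‖v 0 - vs‖ ^ 2) := by
        ring
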